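/- Let T(X) = X^n + X^s + 1 over GF(2), with 0 < s < n, be almost primitive, i.e., T has a primitive factor of degree r for some r > n/2. Then gcd(n, s) = 1. -/

import Mathlib

open Polynomial IntermediateField

/-- A polynomial `P` over GF(2) has period `ρ`: `ρ` is the least positive
integer such that `P` divides `X^ρ - 1`. -/
def HasPeriod (P : Polynomial (ZMod 2)) (ρ : ℕ) : Prop :=
  0 < ρ ∧ P ∣ X ^ ρ - 1 ∧ ∀ m : ℕ, 0 < m → P ∣ X ^ m - 1 → ρ ≤ m

/-- A polynomial `P` of degree `n > 0` over GF(2) is primitive if it is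
irreducible and has period `2^n - 1`. -/
def IsPrimitivePoly (P : Polynomial (ZMod 2)) : Prop :=
  0 < P.natDegree ∧ Irreducible P ∧ HasPeriod P (2 ^ P.natDegree - 1)

lemma arith_aux (d q r : ℕ) (hd : 2 ≤ d) (hq : 2 ≤ q) (hr : d * q < 2 * r) :
    d * (2 ^ q - 1) < 2 ^ r - 1 := by
  obtain ⟨e, rfl⟩ : ∃ e, d = e + 2 := ⟨d - 2, by omega⟩
  have hdd : (e + 2) ^ 2 ≤ 2 ^ (2 * e + 2) := by
    have h1 : e + 2 ≤ 2 ^ (e + 1) := by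
      have := @Nat.lt_two_pow_self (e + 1)
      omega
    calc (e + 2) ^ 2 ≤ (2 ^ (e + 1)) ^ 2 := Nat.pow_le_pow_left h1 2
      _ = 2 ^ (2 * e + 2) := by rw [← pow_mul]; ring_nf
  have hB : (e + 2) * 2 ^ q ≤ 2 ^ r := by
    have hsq : ((e + 2) * 2 ^ q) ^ 2 ≤ (2 ^ r) ^ 2 := by
      have key : ∀ c : ℕ, (e + 2) * q + c ≤ 2 * r → 2 * e + 2 ≤ e * q + c →
          ((e + 2) * 2 ^ q) ^ 2 ≤ (2 ^ r) ^ 2 := by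
        intro c h1 h2
        calc ((e + 2) * 2 ^ q) ^ 2 = (e + 2) ^ 2 * 2 ^ (2 * q) := by
              rw [mul_pow, ← pow_mul]; ring_nf
          _ ≤ 2 ^ (2 * e + 2) * 2 ^ (2 * q) := by
              exact Nat.mul_le_mul_right _ hdd
          _ = 2 ^ (2 * e + 2 + 2 * q) := by rw [← pow_add]
          _ ≤ 2 ^ (e * q + c + 2 * q) := Nat.pow_le_pow_right (by norm_num) (by omega)
          _ ≤ 2 ^ (2 * r) := Nat.pow_le_pow_right (by norm_num) (by nlinarith)
          _ = (2 ^ r) ^ 2 := by rw [← pow_mul]; ring_nf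
      rcases Nat.even_or_odd ((e + 2) * q) with he | ho
      · refine key 2 ?_ (by nlinarith)
        rcases he with ⟨k, hk⟩
        omega
      · -- (e+2)*q odd: e even would make... e+2 odd so e odd, q odd so q ≥ 3
        have hq3 : 3 ≤ q := by
          rcases Nat.even_or_odd q with hqe | hqo
          · exfalso; exact (Nat.not_even_iff_odd.mpr ho) (hqe.mul_left _)
          · rcases hqo with ⟨k, hk⟩; omega
        have he1 : 1 ≤ e := by
          by_contra h
          have : e = 0 := by omega
          subst this
          exact (Nat.not_even_iff_odd.mpr ho) ⟨q, by ring⟩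
        refine key 1 (by omega) (by nlinarith)
    exact (Nat.pow_le_pow_iff_left (by norm_num : 2 ≠ 0)).mp hsq
  have h2q : 1 ≤ 2 ^ q := Nat.one_le_two_pow
  have hmul : (e + 2) * 2 ^ q = (e + 2) * (2 ^ q - 1) + (e + 2) := by
    obtain ⟨t, ht⟩ : ∃ t, 2 ^ q = t + 1 := ⟨2 ^ q - 1, by omega⟩
    rw [ht, Nat.add_sub_cancel]; ring
  omega

lemma alg_aux (n s : ℕ)
    (D : Polynomial (ZMod 2)) (hirr : Irreducible D)
    (hper : 0 < 2 ^ D.natDegree - 1 ∧ D ∣ X ^ (2 ^ D.natDegree - 1) - 1 ∧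
      ∀ m : ℕ, 0 < m → D ∣ X ^ m - 1 → 2 ^ D.natDegree - 1 ≤ m)
    (hdvd : D ∣ (X ^ n + X ^ s + 1 : Polynomial (ZMod 2)))
    (d q s' : ℕ) (hd : 2 ≤ d) (hs'q : s' < q)
    (hn : n = d * q) (hseq : s = d * s') :
    2 ^ D.natDegree - 1 ≤ d * (2 ^ q - 1) := by
  set r := D.natDegree with hr
  haveI : Fact (Irreducible D) := ⟨hirr⟩
  set K := AdjoinRoot D
  set x : K := AdjoinRoot.root D with hxdef
  -- x ≠ 0
  have hxper : x ^ (2 ^ r - 1) = 1 := by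
    have := AdjoinRoot.mk_eq_zero.mpr hper.2.1
    have h2 : (AdjoinRoot.mk D) (X ^ (2 ^ r - 1) - 1 : Polynomial (ZMod 2)) =
        x ^ (2 ^ r - 1) - 1 := by
      simp [map_sub, map_pow, AdjoinRoot.mk_X, hxdef]
    rw [h2] at this
    linear_combination (norm := ring_nf) this -- x^N - 1 = 0 → x^N = 1
  have hx0 : x ≠ 0 := by
    intro h
    have h2r : 0 < 2 ^ r - 1 := hper.1
    rw [h, zero_pow (by omega : 2 ^ r - 1 ≠ 0)] at hxper
    exact zero_ne_one hxper
  set y : K := x ^ d with hy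
  have hy0 : y ≠ 0 := pow_ne_zero _ hx0
  -- G
  set G : Polynomial (ZMod 2) := X ^ q + X ^ s' + 1 with hG
  have hGmonic : G.Monic := by
    have : G = X ^ q + (X ^ s' + 1) := by rw [hG]; ring
    rw [this]
    apply Polynomial.monic_X_pow_add
    have h1 : (X ^ s' + 1 : Polynomial (ZMod 2)).degree ≤ (s' : WithBot ℕ) := by
      refine (Polynomial.degree_add_le _ _).trans (max_le (degree_X_pow_le _) ?_)
      exact degree_one_le.trans (by exact_mod_cast Nat.zero_le s')
    exact h1.trans_lt (by exact_mod_cast hs'q)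
  have hGdeg : G.natDegree = q := by
    have : G = X ^ q + (X ^ s' + 1) := by rw [hG]; ring
    rw [this]
    have h1 : (X ^ s' + 1 : Polynomial (ZMod 2)).degree < (q : WithBot ℕ) := by
      refine ((Polynomial.degree_add_le _ _).trans (max_le (degree_X_pow_le _)
        (degree_one_le.trans (by exact_mod_cast Nat.zero_le s')))).trans_lt ?_
      exact_mod_cast hs'q
    have hdeg : (X ^ q + (X ^ s' + 1) : Polynomial (ZMod 2)).degree = (q : WithBot ℕ) := by
      rw [degree_add_eq_left_of_degree_lt (by rwa [degree_X_pow]), degree_X_pow]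
    exact natDegree_eq_of_degree_eq_some hdeg

  have hcomp : G.comp (X ^ d) = X ^ n + X ^ s + 1 := by
    simp [hG, add_comp, X_pow_comp, one_comp, ← pow_mul, hn, hseq, mul_comm d q, mul_comm d s']
  have hyG : (aeval y) G = 0 := by
    have h1 : (aeval x) (G.comp (X ^ d)) = 0 := by
      rw [hcomp, hxdef, AdjoinRoot.aeval_eq, AdjoinRoot.mk_eq_zero.mpr hdvd]
    rwa [aeval_comp, map_pow, aeval_X] at h1
  have hyint : IsIntegral (ZMod 2) y := ⟨G, hGmonic, hyG⟩
  set m := (minpoly (ZMod 2) y).natDegree with hm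
  have hm0 : 0 < m := minpoly.natDegree_pos hyint
  have hmq : m ≤ q := by
    rw [hm, ← hGdeg]
    exact Polynomial.natDegree_le_of_dvd (minpoly.dvd _ _ hyG) hGmonic.ne_zero
  -- the subfield
  haveI : FiniteDimensional (ZMod 2) ((ZMod 2)⟮y⟯) :=
    IntermediateField.adjoin.finiteDimensional hyint
  haveI : Finite ((ZMod 2)⟮y⟯) := Module.finite_of_finite (ZMod 2)
  haveI : Fintype ((ZMod 2)⟮y⟯) := Fintype.ofFinite _
  have hcard : Fintype.card ((ZMod 2)⟮y⟯) = 2 ^ m := by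
    rw [Module.card_eq_pow_finrank (K := ZMod 2), IntermediateField.adjoin.finrank hyint,
      ZMod.card 2, hm]
  set y' : (ZMod 2)⟮y⟯ := AdjoinSimple.gen (ZMod 2) y with hy'
  have hy'0 : y' ≠ 0 := by
    intro h
    apply hy0
    have := congrArg (algebraMap ((ZMod 2)⟮y⟯) K) h
    simpa [hy'] using this
  have hy'pow : y' ^ (2 ^ m - 1) = 1 := by
    have := FiniteField.pow_card_sub_one_eq_one y' hy'0
    rwa [hcard] at this
  have hypow : y ^ (2 ^ m - 1) = 1 := by
    have := congrArg (algebraMap ((ZMod 2)⟮y⟯) K) hy'pow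
    simpa [hy'] using this
  -- period minimality
  have hxpow : x ^ (d * (2 ^ m - 1)) = 1 := by
    rw [pow_mul, ← hy, hypow]
  have hDdvd : D ∣ X ^ (d * (2 ^ m - 1)) - 1 := by
    rw [← AdjoinRoot.mk_eq_zero]
    have h2 : (AdjoinRoot.mk D) (X ^ (d * (2 ^ m - 1)) - 1 : Polynomial (ZMod 2)) =
        x ^ (d * (2 ^ m - 1)) - 1 := by
      simp [map_sub, map_pow, AdjoinRoot.mk_X, hxdef]
    rw [h2, hxpow, sub_self]
  have hle : 2 ^ r - 1 ≤ d * (2 ^ m - 1) := by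
    have hpos : 0 < d * (2 ^ m - 1) := by
      have h2 : 2 ≤ 2 ^ m := by
        calc 2 = 2 ^ 1 := rfl
        _ ≤ 2 ^ m := Nat.pow_le_pow_right (by norm_num) hm0
      have : 0 < 2 ^ m - 1 := by omega
      positivity
    exact hper.2.2 _ hpos hDdvd
  refine hle.trans (Nat.mul_le_mul_left _ ?_)
  have : 2 ^ m ≤ 2 ^ q := Nat.pow_le_pow_right (by norm_num) hmq
  omega

/-- If the trinomial `X^n + X^s + 1` over GF(2) (with `0 < s < n`) is almost
primitive, i.e. it has a primitive factor of degree `r` for some `r > n/2`,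
then `gcd(n, s) = 1`. -/
theorem gcd_eq_one_of_almost_primitive (n s : ℕ) (hs : 0 < s) (hsn : s < n)
    (hAP : ∃ D : Polynomial (ZMod 2), IsPrimitivePoly D ∧
      D ∣ (X ^ n + X ^ s + 1 : Polynomial (ZMod 2)) ∧ n < 2 * D.natDegree) :
    Nat.gcd n s = 1 := by
  by_contra hne
  obtain ⟨D, ⟨hr0, hirr, hper⟩, hdvd, hrn⟩ := hAP
  set d := Nat.gcd n s with hd
  have hd0 : 0 < d := Nat.gcd_pos_of_pos_right n hs
  have hd2 : 2 ≤ d := by omega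
  obtain ⟨q, hq⟩ : d ∣ n := Nat.gcd_dvd_left n s
  obtain ⟨s', hseq⟩ : d ∣ s := Nat.gcd_dvd_right n s
  have hs'q : s' < q := by
    have : d * s' < d * q := by rw [← hseq, ← hq]; exact hsn
    exact Nat.lt_of_mul_lt_mul_left this
  have hq2 : 2 ≤ q := by
    have hds : d ≤ s := Nat.le_of_dvd hs ⟨s', hseq⟩
    rcases q with _ | _ | q
    · omega
    · omega
    · omega
  have h1 : 2 ^ D.natDegree - 1 ≤ d * (2 ^ q - 1) :=
    alg_aux n s D hirr hper hdvd d q s' hd2 hs'q hq hseq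
  have h2 : d * (2 ^ q - 1) < 2 ^ D.natDegree - 1 :=
    arith_aux d q D.natDegree hd2 hq2 (by rw [← hq]; exact hrn)
  omega
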